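/- In the two-asset lognormal model with independent assets (ρ = 0), HIX tends to 1 as the volatility of the second asset tends to infinity: with equal weights and fixed σ_1 > 0, HIX = (w_1²σ_{X_1}² + w_2²σ_{X_2}²)/(w_1²σ_{X_1}² + w_2²σ_{X_2}² + 2w_1 w_2 σ_{X_1}σ_{X_2} c(σ_1, σ_2)) → 1 as σ_2 → ∞, where c(σ_1, σ_2) = (exp(σ_1σ_2 t) − 1)/(sqrt(exp(σ_1²t) −1) sqrt(exp(σ_2²t)−1)) and σ_{X_2}²/σ_{X_2}² normalization makes the cross term negligible. -/

import Mathlib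

open Filter Real

set_option maxHeartbeats 1000000

theorem stmt_18 (t σ₁ r₁ r₂ x₁ x₂ w₁ w₂ : ℝ) (ht : 0 < t) (hσ₁ : 0 < σ₁)
    (hx₁ : 0 < x₁) (hx₂ : 0 < x₂) (hw₁ : 0 < w₁) (hw₂ : 0 < w₂) :
    Filter.Tendsto (fun σ₂ : ℝ =>
      (w₁ ^ 2 * (x₁ * Real.exp (r₁ * t) * Real.sqrt (Real.exp (σ₁ ^ 2 * t) - 1)) ^ 2 +
        w₂ ^ 2 * (x₂ * Real.exp (r₂ * t) * Real.sqrt (Real.exp (σ₂ ^ 2 * t) - 1)) ^ 2) /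
      (w₁ ^ 2 * (x₁ * Real.exp (r₁ * t) * Real.sqrt (Real.exp (σ₁ ^ 2 * t) - 1)) ^ 2 +
        w₂ ^ 2 * (x₂ * Real.exp (r₂ * t) * Real.sqrt (Real.exp (σ₂ ^ 2 * t) - 1)) ^ 2 +
        2 * w₁ * w₂ * (x₁ * Real.exp (r₁ * t) * Real.sqrt (Real.exp (σ₁ ^ 2 * t) - 1)) *
          (x₂ * Real.exp (r₂ * t) * Real.sqrt (Real.exp (σ₂ ^ 2 * t) - 1)) *
          ((Real.exp (σ₁ * σ₂ * t) - 1) /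
            (Real.sqrt (Real.exp (σ₁ ^ 2 * t) - 1) * Real.sqrt (Real.exp (σ₂ ^ 2 * t) - 1)))))
      Filter.atTop (nhds 1) := by
  set e₁ : ℝ := Real.exp (r₁ * t) with he₁
  set e₂ : ℝ := Real.exp (r₂ * t) with he₂
  have hS₁ : (0:ℝ) < Real.exp (σ₁ ^ 2 * t) - 1 := by
    have h1 : (0:ℝ) < σ₁ ^ 2 * t := by positivity
    have := Real.add_one_le_exp (σ₁ ^ 2 * t)
    nlinarith [Real.exp_pos (σ₁ ^ 2 * t)]
  have hs1 : 0 < Real.sqrt (Real.exp (σ₁ ^ 2 * t) - 1) := Real.sqrt_pos.mpr hS₁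
  set A : ℝ := w₁ ^ 2 * (x₁ * e₁ * Real.sqrt (Real.exp (σ₁ ^ 2 * t) - 1)) ^ 2 with hAdef
  have hA : 0 < A := by positivity
  set B : ℝ → ℝ := fun σ₂ => w₂ ^ 2 * (x₂ * e₂ * Real.sqrt (Real.exp (σ₂ ^ 2 * t) - 1)) ^ 2 with hBdef
  set C : ℝ → ℝ := fun σ₂ => 2 * w₁ * w₂ * x₁ * x₂ * e₁ * e₂ * (Real.exp (σ₁ * σ₂ * t) - 1) with hCdef
  set g : ℝ → ℝ := fun σ₂ => C σ₂ / (A + B σ₂) with hgdef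
  set N : ℝ := max (σ₁ + 1) (1 / t) with hNdef
  -- basic facts for σ₂ ≥ N
  have hfacts : ∀ σ₂ : ℝ, N ≤ σ₂ →
      σ₁ + 1 ≤ σ₂ ∧ 0 < Real.exp (σ₂ ^ 2 * t) - 1 ∧ 2 ≤ Real.exp (σ₂ ^ 2 * t) ∧
      Real.exp (σ₁ * σ₂ * t) ≤ 2 * Real.exp (-(σ₂ * t)) * (Real.exp (σ₂ ^ 2 * t) - 1) := by
    intro σ₂ hσ₂
    have h1 : σ₁ + 1 ≤ σ₂ := le_trans (le_max_left _ _) hσ₂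
    have h2 : 1 / t ≤ σ₂ := le_trans (le_max_right _ _) hσ₂
    have hσ₂pos : 0 < σ₂ := by linarith
    have hσ₂t : 1 ≤ σ₂ * t := (div_le_iff₀ ht).mp h2
    have hsqt : 1 ≤ σ₂ ^ 2 * t := by nlinarith
    have hexp2 : 2 ≤ Real.exp (σ₂ ^ 2 * t) := by
      have h3 := Real.add_one_le_exp (1 : ℝ)
      have h4 : Real.exp 1 ≤ Real.exp (σ₂ ^ 2 * t) := Real.exp_le_exp.mpr hsqt
      linarith
    refine ⟨h1, by linarith, hexp2, ?_⟩
    have harg : σ₁ * σ₂ * t ≤ σ₂ ^ 2 * t - σ₂ * t := by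
      nlinarith [mul_nonneg (mul_nonneg hσ₂pos.le ht.le) (by linarith : (0:ℝ) ≤ σ₂ - 1 - σ₁)]
    have h5 : Real.exp (σ₁ * σ₂ * t) ≤ Real.exp (σ₂ ^ 2 * t - σ₂ * t) := Real.exp_le_exp.mpr harg
    have h6 : Real.exp (σ₂ ^ 2 * t - σ₂ * t) = Real.exp (σ₂ ^ 2 * t) * Real.exp (-(σ₂ * t)) := by
      rw [← Real.exp_add]; ring_nf
    have h7 : Real.exp (σ₂ ^ 2 * t) * Real.exp (-(σ₂ * t)) ≤
        2 * Real.exp (-(σ₂ * t)) * (Real.exp (σ₂ ^ 2 * t) - 1) := by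
      nlinarith [Real.exp_pos (-(σ₂ * t))]
    linarith [h5, h6.le, h6.ge]
  -- g tends to 0
  have hg0 : Tendsto g atTop (nhds 0) := by
    have hexp0 : Tendsto (fun σ₂ : ℝ => Real.exp (-(σ₂ * t))) atTop (nhds 0) :=
      Real.tendsto_exp_atBot.comp ((tendsto_neg_atTop_atBot).comp (tendsto_id.atTop_mul_const ht))
    have hh0 : Tendsto (fun σ₂ : ℝ => 4 * w₁ * x₁ * e₁ * Real.exp (-(σ₂ * t)) / (w₂ * x₂ * e₂))
        atTop (nhds 0) := by
      have := (hexp0.const_mul (4 * w₁ * x₁ * e₁)).div_const (w₂ * x₂ * e₂)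
      simpa [mul_div_assoc, mul_assoc] using this
    apply squeeze_zero' ?_ ?_ hh0
    · filter_upwards [eventually_ge_atTop N] with σ₂ hσ₂
      obtain ⟨h1, hS₂, hexp2, key⟩ := hfacts σ₂ hσ₂
      have hσ₂pos : 0 < σ₂ := by linarith
      have hE1 : 1 ≤ Real.exp (σ₁ * σ₂ * t) :=
        Real.one_le_exp (mul_nonneg (mul_nonneg hσ₁.le hσ₂pos.le) ht.le)
      have hBpos : 0 < B σ₂ := by
        have hs2 : 0 < Real.sqrt (Real.exp (σ₂ ^ 2 * t) - 1) := Real.sqrt_pos.mpr hS₂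
        simp only [hBdef]; positivity
      apply div_nonneg _ (by linarith)
      simp only [hCdef]
      exact mul_nonneg (by positivity) (by linarith)
    · filter_upwards [eventually_ge_atTop N] with σ₂ hσ₂
      obtain ⟨h1, hS₂, hexp2, key⟩ := hfacts σ₂ hσ₂
      have hs2 : 0 < Real.sqrt (Real.exp (σ₂ ^ 2 * t) - 1) := Real.sqrt_pos.mpr hS₂
      have hBpos : 0 < B σ₂ := by simp only [hBdef]; positivity
      have hQ : (0:ℝ) < w₂ * x₂ * e₂ := by positivity
      rw [hgdef]
      simp only
      rw [div_le_div_iff₀ (by linarith) hQ]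
      have hsq : Real.sqrt (Real.exp (σ₂ ^ 2 * t) - 1) ^ 2 = Real.exp (σ₂ ^ 2 * t) - 1 :=
        Real.sq_sqrt hS₂.le
      have hBeq : B σ₂ = w₂ ^ 2 * x₂ ^ 2 * e₂ ^ 2 * (Real.exp (σ₂ ^ 2 * t) - 1) := by
        simp only [hBdef]; rw [mul_pow, mul_pow, hsq]; ring
      rw [hBeq]
      simp only [hCdef]
      have hM : (0:ℝ) ≤ 2 * w₁ * w₂ ^ 2 * x₁ * x₂ ^ 2 * e₁ * e₂ ^ 2 := by positivity
      have hkey2 := mul_le_mul_of_nonneg_left key hM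
      have hAu : (0:ℝ) ≤ 4 * w₁ * x₁ * e₁ * Real.exp (-(σ₂ * t)) * A := by positivity
      linarith only [hkey2, hM, hAu]
  -- eventual equality with 1/(1+g)
  have heq : (fun σ₂ : ℝ => 1 / (1 + g σ₂)) =ᶠ[atTop] (fun σ₂ : ℝ =>
      (w₁ ^ 2 * (x₁ * e₁ * Real.sqrt (Real.exp (σ₁ ^ 2 * t) - 1)) ^ 2 +
        w₂ ^ 2 * (x₂ * e₂ * Real.sqrt (Real.exp (σ₂ ^ 2 * t) - 1)) ^ 2) /
      (w₁ ^ 2 * (x₁ * e₁ * Real.sqrt (Real.exp (σ₁ ^ 2 * t) - 1)) ^ 2 +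
        w₂ ^ 2 * (x₂ * e₂ * Real.sqrt (Real.exp (σ₂ ^ 2 * t) - 1)) ^ 2 +
        2 * w₁ * w₂ * (x₁ * e₁ * Real.sqrt (Real.exp (σ₁ ^ 2 * t) - 1)) *
          (x₂ * e₂ * Real.sqrt (Real.exp (σ₂ ^ 2 * t) - 1)) *
          ((Real.exp (σ₁ * σ₂ * t) - 1) /
            (Real.sqrt (Real.exp (σ₁ ^ 2 * t) - 1) * Real.sqrt (Real.exp (σ₂ ^ 2 * t) - 1))))) := by
    filter_upwards [eventually_ge_atTop N] with σ₂ hσ₂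
    obtain ⟨h1, hS₂, hexp2, key⟩ := hfacts σ₂ hσ₂
    have hs2 : 0 < Real.sqrt (Real.exp (σ₂ ^ 2 * t) - 1) := Real.sqrt_pos.mpr hS₂
    have hBpos : 0 < B σ₂ := by simp only [hBdef]; positivity
    have hcross : 2 * w₁ * w₂ * (x₁ * e₁ * Real.sqrt (Real.exp (σ₁ ^ 2 * t) - 1)) *
          (x₂ * e₂ * Real.sqrt (Real.exp (σ₂ ^ 2 * t) - 1)) *
          ((Real.exp (σ₁ * σ₂ * t) - 1) /
            (Real.sqrt (Real.exp (σ₁ ^ 2 * t) - 1) * Real.sqrt (Real.exp (σ₂ ^ 2 * t) - 1)))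
        = C σ₂ := by
      simp only [hCdef]
      rw [mul_div_assoc', div_eq_iff (mul_ne_zero hs1.ne' hs2.ne')]
      ring
    rw [hcross]
    have hD : A + B σ₂ ≠ 0 := by positivity
    have hone : (A + B σ₂ + C σ₂) / (A + B σ₂) = 1 + C σ₂ / (A + B σ₂) := by
      rw [add_div, div_self hD]
    show 1 / (1 + C σ₂ / (A + B σ₂)) = (A + B σ₂) / (A + B σ₂ + C σ₂)
    rw [← hone, one_div_div]
  -- conclude
  have hlim : Tendsto (fun σ₂ : ℝ => 1 / (1 + g σ₂)) atTop (nhds 1) := by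
    have h1 : Tendsto (fun σ₂ : ℝ => 1 + g σ₂) atTop (nhds 1) := by
      simpa using tendsto_const_nhds.add hg0
    have h2 : Tendsto (fun σ₂ : ℝ => (1:ℝ) / (1 + g σ₂)) atTop (nhds (1 / 1)) :=
      Filter.Tendsto.div tendsto_const_nhds h1 one_ne_zero
    simpa using h2
  exact hlim.congr' heq
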